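/- Let (𝒜⁽ⁿ⁾, τ⁽ⁿ⁾) for n ∈ ℕ and (𝒜, τ) be unital C*-algebras equipped with faithful tracial states, let x⁽ⁿ⁾ = (x₁⁽ⁿ⁾, …, x_m⁽ⁿ⁾) be a tuple in 𝒜⁽ⁿ⁾ for each n, and let x = (x₁, …, x_m) be a tuple in 𝒜 such that x⁽ⁿ⁾ strongly converges to x. Let r be a rational expression in 2m variables such that the tuple (x, x*) = (x₁, …, x_m, x₁*, …, x_m*) lies in the domain of r in 𝒜. Then there exists N ∈ ℕ such that for all n > N the tuple (x⁽ⁿ⁾, (x⁽ⁿ⁾)*) lies in the domain of r in 𝒜⁽ⁿ⁾. -/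

import Mathlib

open Filter Topology

/-- A non-commutative rational expression in variables indexed by `σ`:
the inductive syntax generated by complex scalars and formal variables,
closed under addition, multiplication and formal inverse. -/
inductive RatExpr (σ : Type*) : Type _
  | scalar : ℂ → RatExpr σ
  | var : σ → RatExpr σ
  | add : RatExpr σ → RatExpr σ → RatExpr σ
  | mul : RatExpr σ → RatExpr σ → RatExpr σ
  | inv : RatExpr σ → RatExpr σ

open Classical in
/-- Partial evaluation of a rational expression at a tuple `a` in a unital complex
algebra.  A formal inverse evaluates exactly when its operand evaluates to an
invertible element, and then its value is that inverse. -/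
noncomputable def RatExpr.eval? {σ : Type*} {B : Type*} [Ring B] [Algebra ℂ B]
    (a : σ → B) : RatExpr σ → Option B
  | .scalar c => some (algebraMap ℂ B c)
  | .var i => some (a i)
  | .add r s => do return (← r.eval? a) + (← s.eval? a)
  | .mul r s => do return (← r.eval? a) * (← s.eval? a)
  | .inv r => (r.eval? a).bind fun b => if IsUnit b then some (Ring.inverse b) else none

/-- `a` lies in the domain of the rational expression `r`. -/
def RatExpr.InDomain {σ : Type*} {B : Type*} [Ring B] [Algebra ℂ B]
    (r : RatExpr σ) (a : σ → B) : Prop := (r.eval? a).isSome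

/-- The evaluation of a rational expression (defaulting to `0` off the domain). -/
noncomputable def RatExpr.eval {σ : Type*} {B : Type*} [Ring B] [Algebra ℂ B]
    (r : RatExpr σ) (a : σ → B) : B := (r.eval? a).getD 0

/-- The tuple `(x₁, …, x_m, x₁*, …, x_m*)` built from the `m`-tuple `x`. -/
def starTuple {m : ℕ} {A : Type*} [Star A] (x : Fin m → A) : (Fin m ⊕ Fin m) → A :=
  Sum.elim x (fun i => star (x i))

/-- `τ` is a faithful tracial state on the unital C⋆-algebra `A`:
a linear functional with `τ 1 = 1`, `τ (a* a) ≥ 0`, `τ (a b) = τ (b a)`, and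
`τ (a* a) = 0 → a = 0`. -/
structure IsFaithfulTracialState (A : Type*) [CStarAlgebra A] (τ : A → ℂ) : Prop where
  map_add : ∀ a b, τ (a + b) = τ a + τ b
  map_smul : ∀ (c : ℂ) a, τ (c • a) = c * τ a
  map_one : τ 1 = 1
  nonneg_re : ∀ a, 0 ≤ (τ (star a * a)).re
  im_eq_zero : ∀ a, (τ (star a * a)).im = 0
  tracial : ∀ a b, τ (a * b) = τ (b * a)
  faithful : ∀ a, τ (star a * a) = 0 → a = 0

/-- Strong convergence of a sequence of `m`-tuples `x n` in C⋆-probability spaces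
`(A n, τ' n)` to the tuple `y` in `(B, τ)`: convergence in trace and in norm of all
noncommutative `*`-polynomials, i.e. of all elements of the free algebra on `2m`
generators evaluated at `(x, x*)` resp. `(y, y*)`. -/
def StronglyConverges {m : ℕ} {A : ℕ → Type*} [∀ n, CStarAlgebra (A n)]
    {B : Type*} [CStarAlgebra B]
    (τ' : ∀ n, A n → ℂ) (τ : B → ℂ)
    (x : ∀ n, Fin m → A n) (y : Fin m → B) : Prop :=
  ∀ p : FreeAlgebra ℂ (Fin m ⊕ Fin m),
    Tendsto (fun n => τ' n (FreeAlgebra.lift ℂ (starTuple (x n)) p)) atTop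
      (𝓝 (τ (FreeAlgebra.lift ℂ (starTuple y) p))) ∧
    Tendsto (fun n => ‖FreeAlgebra.lift ℂ (starTuple (x n)) p‖) atTop
      (𝓝 ‖FreeAlgebra.lift ℂ (starTuple y) p‖)


section Aux
variable {σ : Type*} {B : Type*} [Ring B] [Algebra ℂ B]

lemma RatExpr.eval?_eq_some {r : RatExpr σ} {a : σ → B} (h : r.InDomain a) :
    r.eval? a = some (r.eval a) := by
  unfold RatExpr.InDomain at h
  cases hh : r.eval? a with
  | none => rw [hh] at h; simp at h
  | some b => simp [RatExpr.eval, hh]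

lemma RatExpr.inDomain_add_iff {r s : RatExpr σ} {a : σ → B} :
    (RatExpr.add r s).InDomain a ↔ r.InDomain a ∧ s.InDomain a := by
  unfold RatExpr.InDomain
  cases hr : r.eval? a <;> cases hs : s.eval? a <;>
    simp [RatExpr.eval?, hr, hs]

lemma RatExpr.eval_add {r s : RatExpr σ} {a : σ → B} (hr : r.InDomain a) (hs : s.InDomain a) :
    (RatExpr.add r s).eval a = r.eval a + s.eval a := by
  unfold RatExpr.eval
  rw [show (RatExpr.add r s).eval? a = some (r.eval a + s.eval a) by
    simp [RatExpr.eval?, RatExpr.eval?_eq_some hr, RatExpr.eval?_eq_some hs]]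
  rfl

lemma RatExpr.inDomain_mul_iff {r s : RatExpr σ} {a : σ → B} :
    (RatExpr.mul r s).InDomain a ↔ r.InDomain a ∧ s.InDomain a := by
  unfold RatExpr.InDomain
  cases hr : r.eval? a <;> cases hs : s.eval? a <;>
    simp [RatExpr.eval?, hr, hs]

lemma RatExpr.eval_mul {r s : RatExpr σ} {a : σ → B} (hr : r.InDomain a) (hs : s.InDomain a) :
    (RatExpr.mul r s).eval a = r.eval a * s.eval a := by
  unfold RatExpr.eval
  rw [show (RatExpr.mul r s).eval? a = some (r.eval a * s.eval a) by
    simp [RatExpr.eval?, RatExpr.eval?_eq_some hr, RatExpr.eval?_eq_some hs]]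
  rfl

lemma RatExpr.inDomain_inv_iff {r : RatExpr σ} {a : σ → B} :
    (RatExpr.inv r).InDomain a ↔ r.InDomain a ∧ IsUnit (r.eval a) := by
  unfold RatExpr.InDomain
  cases hr : r.eval? a with
  | none => simp [RatExpr.eval?, hr]
  | some b =>
    have : r.eval a = b := by simp [RatExpr.eval, hr]
    by_cases hu : IsUnit b <;> simp [RatExpr.eval?, hr, hu, this]

lemma RatExpr.eval_inv {r : RatExpr σ} {a : σ → B} (hr : r.InDomain a)
    (hu : IsUnit (r.eval a)) :
    (RatExpr.inv r).eval a = Ring.inverse (r.eval a) := by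
  unfold RatExpr.eval
  rw [show (RatExpr.inv r).eval? a = some (Ring.inverse (r.eval a)) by
    simp [RatExpr.eval?, RatExpr.eval?_eq_some hr, hu]]
  rfl

lemma RatExpr.inDomain_scalar (c : ℂ) (a : σ → B) : (RatExpr.scalar c).InDomain a := by
  simp [RatExpr.InDomain, RatExpr.eval?]

lemma RatExpr.eval_scalar (c : ℂ) (a : σ → B) :
    (RatExpr.scalar c).eval a = algebraMap ℂ B c := rfl

lemma RatExpr.inDomain_var (i : σ) (a : σ → B) : (RatExpr.var i).InDomain a := by
  simp [RatExpr.InDomain, RatExpr.eval?]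

lemma RatExpr.eval_var (i : σ) (a : σ → B) : (RatExpr.var i).eval a = a i := rfl

end Aux

section NormAux
variable {R : Type*} [NormedRing R]

lemma norm_one_le_cstar {E : Type*} [NormedRing E] [StarRing E] [CStarRing E] :
    ‖(1 : E)‖ ≤ 1 := by
  rcases subsingleton_or_nontrivial E with h | h
  · rw [Subsingleton.elim (1 : E) 0, norm_zero]; norm_num
  · exact le_of_eq CStarRing.norm_one

lemma norm_pow_le_of (hone : ‖(1:R)‖ ≤ 1) (v : R) {t : ℝ} (hv : ‖v‖ ≤ t) (K : ℕ) :
    ‖v ^ K‖ ≤ t ^ K := by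
  cases K with
  | zero => simpa using hone
  | succ K =>
    exact (norm_pow_le' v (Nat.succ_pos K)).trans
      (pow_le_pow_left₀ (norm_nonneg v) hv _)

lemma pow_sub_pow_norm_le (hone : ‖(1:R)‖ ≤ 1) (u v : R) (hu : ‖u‖ ≤ 1) (hv : ‖v‖ ≤ 1) (k : ℕ) :
    ‖u ^ k - v ^ k‖ ≤ k * ‖u - v‖ := by
  induction k with
  | zero => simp
  | succ k ih =>
    have h1 : u ^ (k+1) - v ^ (k+1) = u ^ k * (u - v) + (u ^ k - v ^ k) * v := by
      rw [pow_succ, pow_succ]; noncomm_ring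
    have h2 : ‖u ^ k * (u - v)‖ ≤ ‖u - v‖ := by
      calc ‖u ^ k * (u - v)‖ ≤ ‖u ^ k‖ * ‖u - v‖ := norm_mul_le _ _
        _ ≤ 1 * ‖u - v‖ := by
            gcongr
            exact (norm_pow_le_of hone u hu k).trans (le_of_eq (one_pow k))
        _ = ‖u - v‖ := one_mul _
    have h3 : ‖(u ^ k - v ^ k) * v‖ ≤ k * ‖u - v‖ := by
      calc ‖(u ^ k - v ^ k) * v‖ ≤ ‖u ^ k - v ^ k‖ * ‖v‖ := norm_mul_le _ _
        _ ≤ (k * ‖u - v‖) * 1 :=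
            mul_le_mul ih hv (norm_nonneg v) (by positivity)
        _ = k * ‖u - v‖ := mul_one _
    calc ‖u ^ (k+1) - v ^ (k+1)‖ ≤ ‖u ^ k * (u - v)‖ + ‖(u ^ k - v ^ k) * v‖ := by
          rw [h1]; exact norm_add_le _ _
      _ ≤ ‖u - v‖ + k * ‖u - v‖ := add_le_add h2 h3
      _ = (k + 1 : ℕ) * ‖u - v‖ := by push_cast; ring

lemma inverse_expand {S : Type*} [Ring S] (b c : S) (hb : IsUnit b) (K : ℕ) :
    Ring.inverse b = (∑ k ∈ Finset.range K, (1 - c * b) ^ k * c)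
      + (1 - c * b) ^ K * Ring.inverse b := by
  have key : Ring.inverse b = c + (1 - c * b) * Ring.inverse b := by
    have hexp : (1 - c * b) * Ring.inverse b
        = Ring.inverse b - c * (b * Ring.inverse b) := by noncomm_ring
    rw [hexp, Ring.mul_inverse_cancel b hb, mul_one]
    abel
  induction K with
  | zero => simp
  | succ K ih =>
    rw [Finset.sum_range_succ, add_assoc]
    conv_lhs => rw [ih]
    congr 1
    conv_lhs => rw [key]
    rw [mul_add, pow_succ, mul_assoc]

lemma approx_inverse (hone : ‖(1:R)‖ ≤ 1) (b q c : R) (hb : IsUnit b) (C ε : ℝ) (hC : ‖c‖ ≤ C)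
    (h1 : ‖1 - c * q‖ ≤ 1) (h2 : ‖1 - c * b‖ ≤ 1/2)
    (hq : ‖q - b‖ ≤ ε) (hbi : ‖Ring.inverse b‖ ≤ 2 * C) (K : ℕ) :
    ‖(∑ k ∈ Finset.range K, (1 - c * q) ^ k * c) - Ring.inverse b‖
      ≤ K ^ 2 * C ^ 2 * ε + (1/2) ^ K * (2 * C) := by
  have hC0 : (0:ℝ) ≤ C := le_trans (norm_nonneg c) hC
  have hε0 : (0:ℝ) ≤ ε := le_trans (norm_nonneg _) hq
  set u : R := 1 - c * q with hu
  set v : R := 1 - c * b with hv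
  have huv : ‖u - v‖ ≤ C * ε := by
    have : u - v = c * (b - q) := by rw [hu, hv]; noncomm_ring
    rw [this]
    calc ‖c * (b - q)‖ ≤ ‖c‖ * ‖b - q‖ := norm_mul_le _ _
      _ ≤ C * ε := by
          rw [← neg_sub q b, norm_neg]
          exact mul_le_mul hC hq (norm_nonneg _) hC0
  have e1 : ∑ k ∈ Finset.range K, (u ^ k - v ^ k) * c
      = (∑ k ∈ Finset.range K, u ^ k * c) - (∑ k ∈ Finset.range K, v ^ k * c) := by
    rw [← Finset.sum_sub_distrib]
    simp only [sub_mul]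
  have hsplit : (∑ k ∈ Finset.range K, u ^ k * c) - Ring.inverse b
      = (∑ k ∈ Finset.range K, (u ^ k - v ^ k) * c) - v ^ K * Ring.inverse b := by
    rw [e1]
    conv_lhs => rw [inverse_expand b c hb K]
    rw [← hv]
    abel
  rw [hsplit]
  have hterm : ∀ k ∈ Finset.range K, ‖(u ^ k - v ^ k) * c‖ ≤ K * C ^ 2 * ε := by
    intro k hk
    have hk' : (k:ℝ) ≤ K := by
      exact_mod_cast le_of_lt (Finset.mem_range.mp hk)
    calc ‖(u ^ k - v ^ k) * c‖ ≤ ‖u ^ k - v ^ k‖ * ‖c‖ := norm_mul_le _ _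
      _ ≤ (k * ‖u - v‖) * C := by
          gcongr
          exact pow_sub_pow_norm_le hone u v h1 (h2.trans (by norm_num)) k
      _ ≤ (K * (C * ε)) * C := by gcongr
      _ = K * C ^ 2 * ε := by ring
  have hsum : ‖∑ k ∈ Finset.range K, (u ^ k - v ^ k) * c‖ ≤ K ^ 2 * C ^ 2 * ε := by
    calc ‖∑ k ∈ Finset.range K, (u ^ k - v ^ k) * c‖
        ≤ ∑ k ∈ Finset.range K, ‖(u ^ k - v ^ k) * c‖ := norm_sum_le _ _
      _ ≤ ∑ _k ∈ Finset.range K, (K * C ^ 2 * ε : ℝ) := Finset.sum_le_sum hterm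
      _ = K * (K * C ^ 2 * ε) := by
          rw [Finset.sum_const, Finset.card_range, nsmul_eq_mul]
      _ = K ^ 2 * C ^ 2 * ε := by ring
  have htail : ‖v ^ K * Ring.inverse b‖ ≤ (1/2) ^ K * (2 * C) := by
    calc ‖v ^ K * Ring.inverse b‖ ≤ ‖v ^ K‖ * ‖Ring.inverse b‖ := norm_mul_le _ _
      _ ≤ (1/2) ^ K * (2 * C) := by
          apply mul_le_mul _ hbi (norm_nonneg _) (by positivity)
          exact norm_pow_le_of hone v h2 K
  calc ‖(∑ k ∈ Finset.range K, (u ^ k - v ^ k) * c) - v ^ K * Ring.inverse b‖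
      ≤ ‖∑ k ∈ Finset.range K, (u ^ k - v ^ k) * c‖ + ‖v ^ K * Ring.inverse b‖ :=
        norm_sub_le _ _
    _ ≤ K ^ 2 * C ^ 2 * ε + (1/2) ^ K * (2 * C) := add_le_add hsum htail

end NormAux

section StarRange
variable {σ : Type*} {B : Type*} [CStarAlgebra B]

lemma star_lift_mem_range (f : σ → B) (hf : ∀ i, ∃ j, star (f i) = f j)
    (p : FreeAlgebra ℂ σ) :
    star (FreeAlgebra.lift ℂ f p) ∈ (FreeAlgebra.lift ℂ f).range := by
  induction p with
  | grade0 c =>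
    rw [AlgHom.commutes, ← algebraMap_star_comm]
    exact Subalgebra.algebraMap_mem _ _
  | grade1 i =>
    obtain ⟨j, hj⟩ := hf i
    rw [FreeAlgebra.lift_ι_apply, hj]
    exact ⟨FreeAlgebra.ι ℂ j, FreeAlgebra.lift_ι_apply _ _⟩
  | mul a b ha hb =>
    rw [map_mul, star_mul]
    exact mul_mem hb ha
  | add a b ha hb =>
    rw [map_add, star_add]
    exact add_mem ha hb

/-- The closed star subalgebra generated by the image of a star-closed tuple. -/
noncomputable def polyClosure (f : σ → B) (hf : ∀ i, ∃ j, star (f i) = f j) :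
    StarSubalgebra ℂ B :=
  StarSubalgebra.topologicalClosure
    { toSubalgebra := (FreeAlgebra.lift ℂ f).range
      star_mem' := fun {a} ha => by
        obtain ⟨p, rfl⟩ := ha
        exact star_lift_mem_range f hf p }

/-- If `b` is approximable by polynomials in `f` and invertible, then its inverse
is also approximable by polynomials in `f`. -/
lemma inverse_approx (f : σ → B) (hf : ∀ i, ∃ j, star (f i) = f j) (b : B)
    (hb : IsUnit b)
    (happrox : ∀ ε > (0:ℝ), ∃ p : FreeAlgebra ℂ σ, ‖FreeAlgebra.lift ℂ f p - b‖ < ε) :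
    ∀ ε > (0:ℝ), ∃ p : FreeAlgebra ℂ σ, ‖FreeAlgebra.lift ℂ f p - Ring.inverse b‖ < ε := by
  set S := polyClosure f hf with hS
  haveI : IsClosed (S : Set B) := by
    rw [hS]
    exact StarSubalgebra.isClosed_topologicalClosure _
  have hbS : b ∈ S := by
    rw [hS]
    apply Metric.mem_closure_iff.mpr
    intro ε hε
    obtain ⟨p, hp⟩ := happrox ε hε
    exact ⟨FreeAlgebra.lift ℂ f p, ⟨p, rfl⟩, by rwa [dist_eq_norm, norm_sub_rev]⟩
  have hbu : IsUnit (⟨b, hbS⟩ : S) := (StarSubalgebra.coe_isUnit S).mp (by simpa using hb)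
  obtain ⟨u, hu⟩ := hbu
  have hinv : Ring.inverse b = ((u⁻¹ : Sˣ) : S) := by
    have h2 : b * ((u⁻¹ : Sˣ) : S).1 = 1 := by
      simpa [hu] using congrArg Subtype.val u.mul_inv
    calc Ring.inverse b = Ring.inverse b * (b * ((u⁻¹ : Sˣ) : S).1) := by rw [h2, mul_one]
      _ = (Ring.inverse b * b) * ((u⁻¹ : Sˣ) : S).1 := by rw [mul_assoc]
      _ = ((u⁻¹ : Sˣ) : S).1 := by rw [Ring.inverse_mul_cancel b hb, one_mul]
  have hmem : Ring.inverse b ∈ closure ((FreeAlgebra.lift ℂ f).range : Set B) := by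
    rw [hinv]
    exact ((u⁻¹ : Sˣ) : S).2
  intro ε hε
  obtain ⟨z, hz, hdist⟩ := Metric.mem_closure_iff.mp hmem ε hε
  obtain ⟨p, rfl⟩ := hz
  exact ⟨p, by rwa [← dist_eq_norm, dist_comm]⟩

end StarRange

section MoreAux
variable {R : Type*} [NormedRing R]

lemma mul_approx_est (a₁ a₂ w₁ w₂ : R) (M δ : ℝ)
    (h₁ : ‖a₁ - w₁‖ ≤ δ) (h₂ : ‖a₂ - w₂‖ ≤ δ) (hw₁ : ‖w₁‖ ≤ M) (hw₂ : ‖w₂‖ ≤ M)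
    (hδ : δ ≤ 1) :
    ‖a₁ * a₂ - w₁ * w₂‖ ≤ (2 * M + 1) * δ := by
  have hδ0 : (0:ℝ) ≤ δ := le_trans (norm_nonneg _) h₁
  have key : a₁ * a₂ - w₁ * w₂ = (a₁ - w₁) * a₂ + w₁ * (a₂ - w₂) := by noncomm_ring
  have ha₂ : ‖a₂‖ ≤ M + 1 := by
    calc ‖a₂‖ = ‖(a₂ - w₂) + w₂‖ := by rw [sub_add_cancel]
      _ ≤ ‖a₂ - w₂‖ + ‖w₂‖ := norm_add_le _ _
      _ ≤ δ + M := add_le_add h₂ hw₂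
      _ ≤ M + 1 := by linarith
  calc ‖a₁ * a₂ - w₁ * w₂‖ ≤ ‖(a₁ - w₁) * a₂‖ + ‖w₁ * (a₂ - w₂)‖ := by
        rw [key]; exact norm_add_le _ _
    _ ≤ ‖a₁ - w₁‖ * ‖a₂‖ + ‖w₁‖ * ‖a₂ - w₂‖ := add_le_add (norm_mul_le _ _) (norm_mul_le _ _)
    _ ≤ δ * (M + 1) + M * δ := by
        have hM0 : (0:ℝ) ≤ M := le_trans (norm_nonneg _) hw₁
        gcongr
    _ = (2 * M + 1) * δ := by ring

lemma isUnit_of_left_right {S : Type*} [Monoid S] (b l rr : S) (hl : l * b = 1)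
    (hr : b * rr = 1) : IsUnit b := by
  have hlr : rr = l := by rw [← one_mul rr, ← hl, mul_assoc, hr, mul_one]
  exact ⟨⟨b, rr, hr, by rw [hlr]; exact hl⟩, rfl⟩

lemma eq_ring_inverse {S : Type*} [Ring S] (b z : S) (hb : IsUnit b) (h : z * b = 1) :
    z = Ring.inverse b := by
  calc z = z * (b * Ring.inverse b) := by rw [Ring.mul_inverse_cancel b hb, mul_one]
    _ = (z * b) * Ring.inverse b := by rw [mul_assoc]
    _ = Ring.inverse b := by rw [h, one_mul]

lemma norm_ring_inverse_one_sub_le [CompleteSpace R] (hone : ‖(1:R)‖ ≤ 1) (u : R) (h : ‖u‖ ≤ 1/2) :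
    IsUnit (1 - u) ∧ ‖Ring.inverse (1 - u)‖ ≤ 2 := by
  have hu1 : ‖u‖ < 1 := lt_of_le_of_lt h (by norm_num)
  have hunit : IsUnit (1 - u) := (Units.oneSub u hu1).isUnit
  refine ⟨hunit, ?_⟩
  set w := Ring.inverse (1 - u) with hw
  have h1 : (1 - u) * w = 1 := Ring.mul_inverse_cancel _ hunit
  have h2 : w = 1 + u * w := by
    have h5 : w - u * w = 1 := by rw [← one_mul w, ← mul_assoc, mul_one, ← sub_mul]; exact h1
    calc w = (w - u * w) + u * w := by abel
      _ = 1 + u * w := by rw [h5]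
  have h3 : ‖w‖ ≤ 1 + ‖u * w‖ := by
    conv_lhs => rw [h2]
    calc ‖1 + u * w‖ ≤ ‖(1:R)‖ + ‖u * w‖ := norm_add_le _ _
      _ ≤ 1 + ‖u * w‖ := by gcongr
  have h4 : ‖u * w‖ ≤ (1/2) * ‖w‖ := by
    calc ‖u * w‖ ≤ ‖u‖ * ‖w‖ := norm_mul_le _ _
      _ ≤ (1/2) * ‖w‖ := by gcongr
  linarith

end MoreAux

lemma starTuple_star_closed {m : ℕ} {B : Type*} [CStarAlgebra B] (y : Fin m → B) :
    ∀ i, ∃ j, star (starTuple y i) = starTuple y j := by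
  rintro (i | i)
  · exact ⟨Sum.inr i, rfl⟩
  · exact ⟨Sum.inl i, by simp [starTuple]⟩

section EstAux
variable {R : Type*} [NormedRing R]

lemma add_approx_est (a₁ a₂ w₁ w₂ : R) (ε : ℝ)
    (h₁ : ‖a₁ - w₁‖ ≤ ε/2) (h₂ : ‖a₂ - w₂‖ ≤ ε/2) :
    ‖(a₁ + a₂) - (w₁ + w₂)‖ ≤ ε := by
  have e : (a₁ + a₂) - (w₁ + w₂) = (a₁ - w₁) + (a₂ - w₂) := by abel
  rw [e]
  calc ‖(a₁ - w₁) + (a₂ - w₂)‖ ≤ ‖a₁ - w₁‖ + ‖a₂ - w₂‖ := norm_add_le _ _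
    _ ≤ ε/2 + ε/2 := add_le_add h₁ h₂
    _ = ε := by ring

lemma one_sub_mul_est (cv qv bv : R) {C ε κ : ℝ}
    (hbase : ‖1 - cv * bv‖ ≤ κ) (hc : ‖cv‖ ≤ C) (hq : ‖qv - bv‖ ≤ ε) :
    ‖1 - cv * qv‖ ≤ κ + C * ε := by
  have e : 1 - cv * qv = (1 - cv * bv) + cv * (bv - qv) := by noncomm_ring
  rw [e]
  have h2 : ‖cv * (bv - qv)‖ ≤ C * ε := by
    calc ‖cv * (bv - qv)‖ ≤ ‖cv‖ * ‖bv - qv‖ := norm_mul_le _ _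
      _ ≤ C * ε := by
          rw [norm_sub_rev]
          exact mul_le_mul hc hq (norm_nonneg _) (le_trans (norm_nonneg _) hc)
  exact le_trans (norm_add_le _ _) (add_le_add hbase h2)

lemma one_sub_mul_est' (cv qv bv : R) {C ε κ : ℝ}
    (hbase : ‖1 - bv * cv‖ ≤ κ) (hc : ‖cv‖ ≤ C) (hq : ‖qv - bv‖ ≤ ε) :
    ‖1 - qv * cv‖ ≤ κ + C * ε := by
  have e : 1 - qv * cv = (1 - bv * cv) + (bv - qv) * cv := by noncomm_ring
  rw [e]
  have h2 : ‖(bv - qv) * cv‖ ≤ C * ε := by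
    calc ‖(bv - qv) * cv‖ ≤ ‖bv - qv‖ * ‖cv‖ := norm_mul_le _ _
      _ ≤ C * ε := by
          rw [norm_sub_rev, mul_comm (C:ℝ) ε]
          exact mul_le_mul hq hc (norm_nonneg _) (le_trans (norm_nonneg _) hq)
  exact le_trans (norm_add_le _ _) (add_le_add hbase h2)

lemma norm_le_of_approx (a w : R) (c δ : ℝ) (h : ‖a - w‖ ≤ δ) (ha : ‖a‖ ≤ c) :
    ‖w‖ ≤ c + δ := by
  calc ‖w‖ = ‖a - (a - w)‖ := by congr 1; abel
    _ ≤ ‖a‖ + ‖a - w‖ := norm_sub_le _ _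
    _ ≤ c + δ := add_le_add ha h

end EstAux

section LiftAux
variable {σ : Type*} {C' : Type*} [CStarAlgebra C'] (f : σ → C')

lemma lift_one_sub_mul (c q : FreeAlgebra ℂ σ) :
    FreeAlgebra.lift ℂ f (1 - c * q)
      = 1 - (FreeAlgebra.lift ℂ f c) * (FreeAlgebra.lift ℂ f q) := by
  simp

lemma lift_geom (c q : FreeAlgebra ℂ σ) (K : ℕ) :
    FreeAlgebra.lift ℂ f (∑ k ∈ Finset.range K, (1 - c * q) ^ k * c)
      = ∑ k ∈ Finset.range K,
          (1 - (FreeAlgebra.lift ℂ f c) * (FreeAlgebra.lift ℂ f q)) ^ k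
            * (FreeAlgebra.lift ℂ f c) := by
  rw [map_sum]
  refine Finset.sum_congr rfl fun k _ => ?_
  rw [map_mul, map_pow, map_sub, map_one, map_mul]

end LiftAux

section Key
variable {m : ℕ} {A : ℕ → Type*} [∀ n, CStarAlgebra (A n)] {B : Type*} [CStarAlgebra B]

set_option maxHeartbeats 1000000 in
lemma key_approx (x : ∀ n, Fin m → A n) (y : Fin m → B)
    (hnorm : ∀ p : FreeAlgebra ℂ (Fin m ⊕ Fin m),
      Filter.Tendsto (fun n => ‖FreeAlgebra.lift ℂ (starTuple (x n)) p‖) Filter.atTop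
        (nhds ‖FreeAlgebra.lift ℂ (starTuple y) p‖))
    (r : RatExpr (Fin m ⊕ Fin m)) (hd : r.InDomain (starTuple y)) :
    (∀ᶠ n in Filter.atTop, r.InDomain (starTuple (x n))) ∧
    ∀ ε > (0:ℝ), ∃ q : FreeAlgebra ℂ (Fin m ⊕ Fin m),
      ‖FreeAlgebra.lift ℂ (starTuple y) q - r.eval (starTuple y)‖ ≤ ε ∧
      ∀ᶠ n in Filter.atTop,
        ‖FreeAlgebra.lift ℂ (starTuple (x n)) q - r.eval (starTuple (x n))‖ ≤ ε := by
  revert hd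
  induction r with
  | scalar c =>
    intro _
    refine ⟨Filter.Eventually.of_forall fun n => RatExpr.inDomain_scalar c _,
      fun ε hε => ⟨algebraMap ℂ _ c, ?_, Filter.Eventually.of_forall fun n => ?_⟩⟩
    · simp only [AlgHom.commutes, RatExpr.eval_scalar, sub_self, norm_zero]
      exact hε.le
    · simp only [AlgHom.commutes, RatExpr.eval_scalar, sub_self, norm_zero]
      exact hε.le
  | var i =>
    intro _
    refine ⟨Filter.Eventually.of_forall fun n => RatExpr.inDomain_var i _,
      fun ε hε => ⟨FreeAlgebra.ι ℂ i, ?_, Filter.Eventually.of_forall fun n => ?_⟩⟩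
    · simp only [FreeAlgebra.lift_ι_apply, RatExpr.eval_var, sub_self, norm_zero]
      exact hε.le
    · simp only [FreeAlgebra.lift_ι_apply, RatExpr.eval_var, sub_self, norm_zero]
      exact hε.le
  | add r s ihr ihs =>
    intro hd
    rw [RatExpr.inDomain_add_iff] at hd
    obtain ⟨hdr, hds⟩ := hd
    obtain ⟨hr1, hr2⟩ := ihr hdr
    obtain ⟨hs1, hs2⟩ := ihs hds
    refine ⟨?_, fun ε hε => ?_⟩
    · filter_upwards [hr1, hs1] with n h1 h2
      exact RatExpr.inDomain_add_iff.mpr ⟨h1, h2⟩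
    · obtain ⟨q₁, hq₁y, hq₁n⟩ := hr2 (ε/2) (by positivity)
      obtain ⟨q₂, hq₂y, hq₂n⟩ := hs2 (ε/2) (by positivity)
      refine ⟨q₁ + q₂, ?_, ?_⟩
      · rw [map_add, RatExpr.eval_add hdr hds]
        exact add_approx_est _ _ _ _ ε hq₁y hq₂y
      · filter_upwards [hr1, hs1, hq₁n, hq₂n] with n h1 h2 h3 h4
        rw [map_add, RatExpr.eval_add h1 h2]
        exact add_approx_est _ _ _ _ ε h3 h4
  | mul r s ihr ihs =>
    intro hd
    rw [RatExpr.inDomain_mul_iff] at hd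
    obtain ⟨hdr, hds⟩ := hd
    obtain ⟨hr1, hr2⟩ := ihr hdr
    obtain ⟨hs1, hs2⟩ := ihs hds
    obtain ⟨p₁, hp₁y, hp₁n⟩ := hr2 1 one_pos
    obtain ⟨p₂, hp₂y, hp₂n⟩ := hs2 1 one_pos
    set M : ℝ := max (‖FreeAlgebra.lift ℂ (starTuple y) p₁‖ + 2)
      (‖FreeAlgebra.lift ℂ (starTuple y) p₂‖ + 2) with hM
    have hM0 : 0 < M := lt_of_lt_of_le (by positivity) (le_max_left _ _)
    have hMry : ‖r.eval (starTuple y)‖ ≤ M := by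
      have := norm_le_of_approx _ _ _ _ hp₁y (le_refl ‖FreeAlgebra.lift ℂ (starTuple y) p₁‖)
      calc ‖r.eval (starTuple y)‖ ≤ ‖FreeAlgebra.lift ℂ (starTuple y) p₁‖ + 1 := this
        _ ≤ M := le_trans (by linarith) (le_max_left _ _)
    have hMsy : ‖s.eval (starTuple y)‖ ≤ M := by
      have := norm_le_of_approx _ _ _ _ hp₂y (le_refl ‖FreeAlgebra.lift ℂ (starTuple y) p₂‖)
      calc ‖s.eval (starTuple y)‖ ≤ ‖FreeAlgebra.lift ℂ (starTuple y) p₂‖ + 1 := this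
        _ ≤ M := le_trans (by linarith) (le_max_right _ _)
    have hMrn : ∀ᶠ n in Filter.atTop, ‖r.eval (starTuple (x n))‖ ≤ M := by
      filter_upwards [hp₁n, (hnorm p₁).eventually
        (eventually_le_nhds (lt_add_one ‖FreeAlgebra.lift ℂ (starTuple y) p₁‖))] with n h1 h2
      have := norm_le_of_approx _ _ _ _ h1 h2
      calc ‖r.eval (starTuple (x n))‖ ≤ (‖FreeAlgebra.lift ℂ (starTuple y) p₁‖ + 1) + 1 := this
        _ ≤ M := le_trans (by linarith) (le_max_left _ _)
    have hMsn : ∀ᶠ n in Filter.atTop, ‖s.eval (starTuple (x n))‖ ≤ M := by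
      filter_upwards [hp₂n, (hnorm p₂).eventually
        (eventually_le_nhds (lt_add_one ‖FreeAlgebra.lift ℂ (starTuple y) p₂‖))] with n h1 h2
      have := norm_le_of_approx _ _ _ _ h1 h2
      calc ‖s.eval (starTuple (x n))‖ ≤ (‖FreeAlgebra.lift ℂ (starTuple y) p₂‖ + 1) + 1 := this
        _ ≤ M := le_trans (by linarith) (le_max_right _ _)
    refine ⟨?_, fun ε hε => ?_⟩
    · filter_upwards [hr1, hs1] with n h1 h2
      exact RatExpr.inDomain_mul_iff.mpr ⟨h1, h2⟩
    · set δ : ℝ := min 1 (ε/(2*M+1)) with hδ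
      have hδ0 : 0 < δ := lt_min one_pos (by positivity)
      have hδε : (2*M+1) * δ ≤ ε := by
        have h2 : δ ≤ ε/(2*M+1) := min_le_right _ _
        calc (2*M+1) * δ ≤ (2*M+1) * (ε/(2*M+1)) := by gcongr
          _ = ε := by field_simp
      obtain ⟨q₁, hq₁y, hq₁n⟩ := hr2 δ hδ0
      obtain ⟨q₂, hq₂y, hq₂n⟩ := hs2 δ hδ0
      refine ⟨q₁ * q₂, ?_, ?_⟩
      · rw [map_mul, RatExpr.eval_mul hdr hds]
        exact le_trans (mul_approx_est _ _ _ _ M δ hq₁y hq₂y hMry hMsy (min_le_left _ _)) hδε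
      · filter_upwards [hr1, hs1, hq₁n, hq₂n, hMrn, hMsn] with n h1 h2 h3 h4 h5 h6
        rw [map_mul, RatExpr.eval_mul h1 h2]
        exact le_trans (mul_approx_est _ _ _ _ M δ h3 h4 h5 h6 (min_le_left _ _)) hδε
  | inv r ih =>
    intro hd
    rw [RatExpr.inDomain_inv_iff] at hd
    obtain ⟨hdr, hu⟩ := hd
    obtain ⟨h1, h2⟩ := ih hdr
    set b : B := r.eval (starTuple y) with hb
    have happrox : ∀ ε > (0:ℝ), ∃ p : FreeAlgebra ℂ (Fin m ⊕ Fin m),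
        ‖FreeAlgebra.lift ℂ (starTuple y) p - b‖ < ε := by
      intro ε hε
      obtain ⟨p, hp, _⟩ := h2 (ε/2) (by positivity)
      exact ⟨p, lt_of_le_of_lt hp (by linarith)⟩
    have hinvapprox := inverse_approx (starTuple y) (starTuple_star_closed y) b hu happrox
    set δc : ℝ := 1/(8*(‖b‖+1)) with hδc
    have hδc0 : 0 < δc := by positivity
    obtain ⟨c, hc⟩ := hinvapprox δc hδc0
    set C : ℝ := ‖FreeAlgebra.lift ℂ (starTuple y) c‖ + 1 with hC
    have hC0 : 0 < C := by positivity
    have hcC : ‖FreeAlgebra.lift ℂ (starTuple y) c‖ ≤ C := by rw [hC]; linarith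
    have hδc1 : δc ≤ 1 := by
      rw [hδc]
      rw [div_le_one (by positivity)]
      have := norm_nonneg b
      linarith
    have hbiC : ‖Ring.inverse b‖ ≤ C := by
      have := norm_le_of_approx _ _ ‖FreeAlgebra.lift ℂ (starTuple y) c‖ δc hc.le (le_refl _)
      calc ‖Ring.inverse b‖ ≤ ‖FreeAlgebra.lift ℂ (starTuple y) c‖ + δc := this
        _ ≤ C := by rw [hC]; linarith
    have hinv_mul : Ring.inverse b * b = 1 := Ring.inverse_mul_cancel b hu
    have hmul_inv : b * Ring.inverse b = 1 := Ring.mul_inverse_cancel b hu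
    have hδcb : δc * ‖b‖ ≤ 1/8 := by
      rw [hδc]
      rw [div_mul_eq_mul_div, one_mul, div_le_div_iff₀ (by positivity) (by norm_num)]
      have := norm_nonneg b
      linarith
    have hcb : ‖1 - (FreeAlgebra.lift ℂ (starTuple y) c) * b‖ ≤ 1/8 := by
      have e : 1 - (FreeAlgebra.lift ℂ (starTuple y) c) * b
          = (Ring.inverse b - FreeAlgebra.lift ℂ (starTuple y) c) * b := by
        rw [sub_mul, hinv_mul]
      rw [e]
      calc ‖(Ring.inverse b - FreeAlgebra.lift ℂ (starTuple y) c) * b‖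
          ≤ ‖Ring.inverse b - FreeAlgebra.lift ℂ (starTuple y) c‖ * ‖b‖ := norm_mul_le _ _
        _ ≤ δc * ‖b‖ := by
            rw [norm_sub_rev]
            exact mul_le_mul hc.le (le_refl _) (norm_nonneg _) hδc0.le
        _ ≤ 1/8 := hδcb
    have hbc : ‖1 - b * (FreeAlgebra.lift ℂ (starTuple y) c)‖ ≤ 1/8 := by
      have e : 1 - b * (FreeAlgebra.lift ℂ (starTuple y) c)
          = b * (Ring.inverse b - FreeAlgebra.lift ℂ (starTuple y) c) := by
        rw [mul_sub, hmul_inv]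
      rw [e]
      calc ‖b * (Ring.inverse b - FreeAlgebra.lift ℂ (starTuple y) c)‖
          ≤ ‖b‖ * ‖Ring.inverse b - FreeAlgebra.lift ℂ (starTuple y) c‖ := norm_mul_le _ _
        _ ≤ ‖b‖ * δc := by
            rw [norm_sub_rev]
            exact mul_le_mul (le_refl _) hc.le (norm_nonneg _) (norm_nonneg _)
        _ ≤ 1/8 := by rw [mul_comm]; exact hδcb
    set ε₁ : ℝ := min 1 (1/(16*C)) with hε₁
    have hε₁0 : 0 < ε₁ := lt_min one_pos (by positivity)
    have hCε₁ : C * ε₁ ≤ 1/16 := by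
      have h2' : ε₁ ≤ 1/(16*C) := min_le_right _ _
      calc C * ε₁ ≤ C * (1/(16*C)) := by gcongr
        _ = 1/16 := by
            rw [mul_one_div, div_eq_div_iff (by positivity) (by norm_num)]
            ring
    obtain ⟨q, hqy, hqn⟩ := h2 ε₁ hε₁0
    -- estimates of `1 - c*q`, `1 - q*c` at `y`
    have hcqy : ‖FreeAlgebra.lift ℂ (starTuple y) (1 - c * q)‖ ≤ 1/8 + 1/16 := by
      rw [lift_one_sub_mul]
      refine le_trans (one_sub_mul_est _ _ b hcb hcC hqy) ?_
      linarith
    have hqcy : ‖FreeAlgebra.lift ℂ (starTuple y) (1 - q * c)‖ ≤ 1/8 + 1/16 := by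
      have e : FreeAlgebra.lift ℂ (starTuple y) (1 - q * c)
          = 1 - (FreeAlgebra.lift ℂ (starTuple y) q) * (FreeAlgebra.lift ℂ (starTuple y) c) := by
        simp
      rw [e]
      refine le_trans (one_sub_mul_est' _ _ b hbc hcC hqy) ?_
      linarith
    -- eventual estimates
    have hcn : ∀ᶠ n in Filter.atTop, ‖FreeAlgebra.lift ℂ (starTuple (x n)) c‖ ≤ C :=
      (hnorm c).eventually (eventually_le_nhds (by rw [hC]; linarith))
    have hP₁n : ∀ᶠ n in Filter.atTop,
        ‖FreeAlgebra.lift ℂ (starTuple (x n)) (1 - c * q)‖ ≤ 1/4 :=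
      (hnorm (1 - c * q)).eventually (eventually_le_nhds (by
        refine lt_of_le_of_lt hcqy ?_; norm_num))
    have hP₂n : ∀ᶠ n in Filter.atTop,
        ‖FreeAlgebra.lift ℂ (starTuple (x n)) (1 - q * c)‖ ≤ 1/4 :=
      (hnorm (1 - q * c)).eventually (eventually_le_nhds (by
        refine lt_of_le_of_lt hqcy ?_; norm_num))
    -- the big eventual statement
    have E : ∀ᶠ n in Filter.atTop,
        r.InDomain (starTuple (x n)) ∧
        IsUnit (r.eval (starTuple (x n))) ∧
        ‖FreeAlgebra.lift ℂ (starTuple (x n)) c‖ ≤ C ∧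
        ‖1 - (FreeAlgebra.lift ℂ (starTuple (x n)) c) * (r.eval (starTuple (x n)))‖ ≤ 1/2 ∧
        ‖Ring.inverse (r.eval (starTuple (x n)))‖ ≤ 2*C := by
      filter_upwards [h1, hqn, hcn, hP₁n, hP₂n] with n hdn hqn' hcn' hP₁' hP₂'
      set cn := FreeAlgebra.lift ℂ (starTuple (x n)) c with hcn_def
      set qn := FreeAlgebra.lift ℂ (starTuple (x n)) q with hqn_def
      set bn := r.eval (starTuple (x n)) with hbn_def
      rw [lift_one_sub_mul] at hP₁'
      have e₂ : FreeAlgebra.lift ℂ (starTuple (x n)) (1 - q * c) = 1 - qn * cn := by simp [hqn_def, hcn_def]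
      rw [e₂] at hP₂'
      have hbq : ‖bn - qn‖ ≤ ε₁ := by rw [norm_sub_rev]; exact hqn'
      have hcbn : ‖1 - cn * bn‖ ≤ 1/2 := by
        refine le_trans (one_sub_mul_est cn bn qn hP₁' hcn' hbq) ?_
        linarith
      have hbcn : ‖1 - bn * cn‖ ≤ 1/2 := by
        refine le_trans (one_sub_mul_est' cn bn qn hP₂' hcn' hbq) ?_
        linarith
      obtain ⟨hu₁, hn₁⟩ := norm_ring_inverse_one_sub_le norm_one_le_cstar (1 - cn * bn) hcbn
      obtain ⟨hu₂, hn₂⟩ := norm_ring_inverse_one_sub_le norm_one_le_cstar (1 - bn * cn) hbcn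
      rw [sub_sub_cancel] at hu₁ hn₁ hu₂ hn₂
      have hl : (Ring.inverse (cn * bn) * cn) * bn = 1 := by
        rw [mul_assoc]; exact Ring.inverse_mul_cancel _ hu₁
      have hr' : bn * (cn * Ring.inverse (bn * cn)) = 1 := by
        rw [← mul_assoc]; exact Ring.mul_inverse_cancel _ hu₂
      have hbun : IsUnit bn := isUnit_of_left_right bn _ _ hl hr'
      have hbin : Ring.inverse bn = Ring.inverse (cn * bn) * cn :=
        (eq_ring_inverse bn _ hbun hl).symm
      refine ⟨hdn, hbun, hcn', hcbn, ?_⟩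
      rw [hbin]
      calc ‖Ring.inverse (cn * bn) * cn‖ ≤ ‖Ring.inverse (cn * bn)‖ * ‖cn‖ := norm_mul_le _ _
        _ ≤ 2 * C := mul_le_mul hn₁ hcn' (norm_nonneg _) (by norm_num)
    refine ⟨?_, fun ε hε => ?_⟩
    · filter_upwards [E] with n hn
      exact RatExpr.inDomain_inv_iff.mpr ⟨hn.1, hn.2.1⟩
    · -- choose K and ε₂
      obtain ⟨K, hK⟩ := exists_pow_lt_of_lt_one
        (show (0:ℝ) < ε/(2*(2*C)) by positivity) (by norm_num : (1/2:ℝ) < 1)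
      have hKtail : (1/2:ℝ)^K * (2*C) ≤ ε/2 := by
        calc (1/2:ℝ)^K * (2*C) ≤ (ε/(2*(2*C))) * (2*C) := by
              apply mul_le_mul hK.le (le_refl _) (by positivity) (by positivity)
          _ = ε/2 := by field_simp
      set ε₂ : ℝ := min ε₁ (ε/(2*((K:ℝ)^2*C^2+1))) with hε₂
      have hε₂0 : 0 < ε₂ := lt_min hε₁0 (by positivity)
      have hε₂ε₁ : ε₂ ≤ ε₁ := min_le_left _ _
      have hKhead : (K:ℝ)^2 * C^2 * ε₂ ≤ ε/2 := by
        have h2' : ε₂ ≤ ε/(2*((K:ℝ)^2*C^2+1)) := min_le_right _ _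
        have hpos : (0:ℝ) < (K:ℝ)^2*C^2+1 := by positivity
        calc (K:ℝ)^2 * C^2 * ε₂ ≤ ((K:ℝ)^2*C^2+1) * ε₂ := by
              apply mul_le_mul _ (le_refl _) hε₂0.le hpos.le
              nlinarith [sq_nonneg ((K:ℝ)*C)]
          _ ≤ ((K:ℝ)^2*C^2+1) * (ε/(2*((K:ℝ)^2*C^2+1))) := by gcongr
          _ = ε/2 := by field_simp
      obtain ⟨q₂, hq₂y, hq₂n⟩ := h2 ε₂ hε₂0
      have hCε₂ : C * ε₂ ≤ 1/16 := le_trans (by gcongr) hCε₁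
      refine ⟨∑ k ∈ Finset.range K, (1 - c * q₂)^k * c, ?_, ?_⟩
      · rw [RatExpr.eval_inv hdr hu, lift_geom]
        have h1y : ‖1 - (FreeAlgebra.lift ℂ (starTuple y) c)
            * (FreeAlgebra.lift ℂ (starTuple y) q₂)‖ ≤ 1 := by
          refine le_trans (one_sub_mul_est _ _ b hcb hcC hq₂y) ?_
          linarith
        refine le_trans (approx_inverse norm_one_le_cstar b _ _ hu C ε₂ hcC h1y (by linarith)
          hq₂y (by linarith) K) ?_
        linarith [hKtail, hKhead]
      · filter_upwards [E, hq₂n] with n hn hq₂n'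
        obtain ⟨hdn, hbun, hcn', hcbn, hbin⟩ := hn
        rw [RatExpr.eval_inv hdn hbun, lift_geom]
        have h1n : ‖1 - (FreeAlgebra.lift ℂ (starTuple (x n)) c)
            * (FreeAlgebra.lift ℂ (starTuple (x n)) q₂)‖ ≤ 1 := by
          refine le_trans (one_sub_mul_est _ _ (r.eval (starTuple (x n))) hcbn hcn' hq₂n') ?_
          linarith
        refine le_trans (approx_inverse norm_one_le_cstar (r.eval (starTuple (x n))) _ _ hbun
          C ε₂ hcn' h1n hcbn hq₂n' hbin K) ?_
        linarith [hKtail, hKhead]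

end Key

/-- If `x⁽ⁿ⁾` strongly converges to `x` and `(x, x*)` lies in the domain of the rational
expression `r`, then `(x⁽ⁿ⁾, (x⁽ⁿ⁾)*)` lies in the domain of `r` for all `n` large enough. -/
theorem stmt2 {m : ℕ} {A : ℕ → Type*} [∀ n, CStarAlgebra (A n)]
    {B : Type*} [CStarAlgebra B]
    (τ' : ∀ n, A n → ℂ) (τ : B → ℂ)
    (hτ' : ∀ n, IsFaithfulTracialState (A n) (τ' n)) (hτ : IsFaithfulTracialState B τ)
    (x : ∀ n, Fin m → A n) (y : Fin m → B)
    (hconv : StronglyConverges τ' τ x y)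
    (r : RatExpr (Fin m ⊕ Fin m))
    (hdom : r.InDomain (starTuple y)) :
    ∃ N : ℕ, ∀ n > N, r.InDomain (starTuple (x n)) := by
  have hnorm : ∀ p : FreeAlgebra ℂ (Fin m ⊕ Fin m),
      Tendsto (fun n => ‖FreeAlgebra.lift ℂ (starTuple (x n)) p‖) atTop
        (𝓝 ‖FreeAlgebra.lift ℂ (starTuple y) p‖) := fun p => (hconv p).2
  obtain ⟨h1, -⟩ := key_approx x y hnorm r hdom
  obtain ⟨N, hN⟩ := Filter.eventually_atTop.mp h1
  exact ⟨N, fun n hn => hN n hn.le⟩
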